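/- Splitting the single-layer kernel: with K(s,t) = ln‖f(s)-f(t)‖, K₁(s,t) = (1/2)ln R(s,t) (extended by continuity to t = s via K₁(s,s) = ln J(s)), and K₂(s,t) = ln|s-t|, one has ∫∫ K(s,t) g(s) h(t) ds dt = ∫∫ K₁(s,t) g(s) h(t) ds dt + ∫∫ K₂(s,t) g(s) h(t) ds dt for all bounded measurable g, h, where all three double integrals over [a,b]² exist. -/

import Mathlib

open MeasureTheory

private lemma log_II (L : ℝ) (hL : 0 < L) : IntervalIntegrable Real.log volume 0 L := by
  rw [intervalIntegrable_iff_integrableOn_Ioc_of_le hL.le]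
  have h1 : IntegrableOn (fun x : ℝ => 2 * x ^ (-(1/2) : ℝ) + L) (Set.Ioc 0 L) volume := by
    refine Integrable.add ?_ (integrableOn_const measure_Ioc_lt_top.ne)
    exact ((intervalIntegrable_iff_integrableOn_Ioc_of_le hL.le).mp
      (intervalIntegral.intervalIntegrable_rpow' (by norm_num))).const_mul 2
  refine Integrable.mono h1 Real.measurable_log.aestronglyMeasurable.restrict ?_
  refine (ae_restrict_mem measurableSet_Ioc).mono ?_
  intro x hx
  have hx0 : 0 < x := hx.1
  have hrp : 0 < x ^ (-(1/2) : ℝ) := Real.rpow_pos_of_pos hx0 _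
  have hrhs : ‖2 * x ^ (-(1/2) : ℝ) + L‖ = 2 * x ^ (-(1/2) : ℝ) + L := by
    rw [Real.norm_eq_abs, abs_of_pos]; positivity
  rw [Real.norm_eq_abs, hrhs]
  rcases le_or_gt x 1 with h1x | h1x
  · have hlog : Real.log x ≤ 0 := Real.log_nonpos hx0.le h1x
    rw [abs_of_nonpos hlog]
    have e : Real.log (x ^ (-(1/2) : ℝ)) = (-(1/2)) * Real.log x := Real.log_rpow hx0 _
    have hle : Real.log (x ^ (-(1/2) : ℝ)) ≤ x ^ (-(1/2) : ℝ) :=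
      (Real.log_le_sub_one_of_pos hrp).trans (by linarith)
    rw [e] at hle
    linarith
  · have hlog : 0 ≤ Real.log x := Real.log_nonneg h1x.le
    rw [abs_of_nonneg hlog]
    have : Real.log x ≤ x - 1 := Real.log_le_sub_one_of_pos hx0
    have := hx.2
    linarith

private lemma log_IOn (L : ℝ) (hL : 0 < L) :
    IntegrableOn Real.log (Set.Icc (-L) L) volume := by
  have h0 := log_II L hL
  have hneg : IntervalIntegrable Real.log volume (-L) 0 := by
    have h := (IntervalIntegrable.iff_comp_neg (f := Real.log)).mp h0
    simp only [Real.log_neg_eq_log, neg_zero] at h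
    exact h.symm
  exact (intervalIntegrable_iff_integrableOn_Icc_of_le (by linarith)).mp (hneg.trans h0)

private lemma log_sub_int (a b : ℝ) (hab : a < b) :
    IntegrableOn (fun p : ℝ × ℝ => Real.log (p.1 - p.2))
      (Set.Icc a b ×ˢ Set.Icc a b) volume := by
  set L : ℝ := b - a with hLdef
  have hL : 0 < L := by simp only [hLdef]; linarith
  have hmeas : Measurable fun p : ℝ × ℝ => Real.log (p.1 - p.2) :=
    Real.measurable_log.comp (measurable_fst.sub measurable_snd)
  refine ⟨hmeas.aestronglyMeasurable.restrict, ?_⟩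
  have hM : (∫⁻ u in Set.Icc (-L) L, ‖Real.log u‖₊ ∂volume) < ⊤ := (log_IOn L hL).2
  have hrw : (volume : Measure (ℝ × ℝ)).restrict (Set.Icc a b ×ˢ Set.Icc a b)
      = ((volume : Measure ℝ).restrict (Set.Icc a b)).prod
        ((volume : Measure ℝ).restrict (Set.Icc a b)) := by
    rw [MeasureTheory.Measure.volume_eq_prod, Measure.prod_restrict]
  rw [HasFiniteIntegral, hrw]
  rw [lintegral_prod _ (hmeas.enorm.aemeasurable)]
  have hinner : ∀ s ∈ Set.Icc a b,
      (∫⁻ t in Set.Icc a b, (‖Real.log (s - t)‖₊ : ENNReal) ∂volume)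
        ≤ ∫⁻ u in Set.Icc (-L) L, ‖Real.log u‖₊ ∂volume := by
    intro s hs
    have hsub : Set.Icc a b ⊆ (fun t : ℝ => s - t) ⁻¹' Set.Icc (-L) L := by
      intro t ht
      simp only [Set.mem_preimage, Set.mem_Icc, hLdef]
      constructor <;> [linarith [hs.1, ht.2]; linarith [hs.2, ht.1]]
    calc (∫⁻ t in Set.Icc a b, (‖Real.log (s - t)‖₊ : ENNReal) ∂volume)
        ≤ ∫⁻ t in (fun t : ℝ => s - t) ⁻¹' Set.Icc (-L) L,
            (‖Real.log (s - t)‖₊ : ENNReal) ∂volume := lintegral_mono_set hsub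
      _ = ∫⁻ u in Set.Icc (-L) L, ‖Real.log u‖₊ ∂volume := by
          have hmp : MeasurePreserving (fun t : ℝ => s - t) volume volume := by
            have := (measurePreserving_add_left (volume : Measure ℝ) s).comp
              (Measure.measurePreserving_neg (volume : Measure ℝ))
            simpa [Function.comp_def, sub_eq_add_neg] using this
          exact hmp.setLIntegral_comp_preimage_emb
            (MeasurableEquiv.subLeft s).measurableEmbedding
            (fun u => (‖Real.log u‖₊ : ENNReal)) (Set.Icc (-L) L)
  calc (∫⁻ s in Set.Icc a b, ∫⁻ t in Set.Icc a b,
          (‖Real.log (s - t)‖₊ : ENNReal) ∂volume ∂volume)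
      ≤ ∫⁻ _ in Set.Icc a b, (∫⁻ u in Set.Icc (-L) L, ‖Real.log u‖₊ ∂volume) ∂volume := by
        refine lintegral_mono_ae ?_
        exact (ae_restrict_mem measurableSet_Icc).mono hinner
    _ = (∫⁻ u in Set.Icc (-L) L, ‖Real.log u‖₊ ∂volume) * volume (Set.Icc a b) :=
        setLIntegral_const _ _
    _ < ⊤ := ENNReal.mul_lt_top hM (by simp [Real.volume_Icc])

/-- Splitting of the single-layer kernel `K = K₁ + K₂` with
`K(s,t) = ln‖f(s)-f(t)‖`, `K₁(s,t) = (1/2)ln R(s,t)` (extended by continuity by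
`K₁(s,s) = ln J(s)`) and `K₂(s,t) = ln|s-t|`: all three double integrals over
`[a,b]²` against bounded measurable `g, h` exist and
`∫∫ K g h = ∫∫ K₁ g h + ∫∫ K₂ g h`. -/
theorem stmt12 (a b : ℝ) (hab : a < b) (f : ℝ → EuclideanSpace ℝ (Fin 2))
    (hf : ContDiffOn ℝ 1 f (Set.Icc a b)) (hinj : Set.InjOn f (Set.Icc a b))
    (J : ℝ → ℝ) (hJ : ∀ s, J s = ‖derivWithin f (Set.Icc a b) s‖)
    (R : ℝ → ℝ → ℝ) (hR : ∀ s t, s ≠ t → R s t = ‖f s - f t‖ ^ 2 / (s - t) ^ 2)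
    (c C : ℝ) (hc : 0 < c)
    (hRbound : ∀ s ∈ Set.Icc a b, ∀ t ∈ Set.Icc a b, s ≠ t → c ≤ R s t ∧ R s t ≤ C)
    (K K₁ K₂ : ℝ → ℝ → ℝ)
    (hK : ∀ s t, K s t = Real.log ‖f s - f t‖)
    (hK₁ : ∀ s t, K₁ s t = if s = t then Real.log (J s) else (1 / 2) * Real.log (R s t))
    (hK₂ : ∀ s t, K₂ s t = Real.log |s - t|)
    (g h : ℝ → ℝ) (hg : Measurable g) (hh : Measurable h)
    (Mg Mh : ℝ) (hgb : ∀ x, |g x| ≤ Mg) (hhb : ∀ x, |h x| ≤ Mh) :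
    IntegrableOn (fun p : ℝ × ℝ => K p.1 p.2 * g p.1 * h p.2)
      (Set.Icc a b ×ˢ Set.Icc a b) volume ∧
    IntegrableOn (fun p : ℝ × ℝ => K₁ p.1 p.2 * g p.1 * h p.2)
      (Set.Icc a b ×ˢ Set.Icc a b) volume ∧
    IntegrableOn (fun p : ℝ × ℝ => K₂ p.1 p.2 * g p.1 * h p.2)
      (Set.Icc a b ×ˢ Set.Icc a b) volume ∧
    (∫ p in Set.Icc a b ×ˢ Set.Icc a b, K p.1 p.2 * g p.1 * h p.2) =
      (∫ p in Set.Icc a b ×ˢ Set.Icc a b, K₁ p.1 p.2 * g p.1 * h p.2) +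
      (∫ p in Set.Icc a b ×ˢ Set.Icc a b, K₂ p.1 p.2 * g p.1 * h p.2) := by
  have hMg : 0 ≤ Mg := le_trans (abs_nonneg _) (hgb 0)
  have hMh : 0 ≤ Mh := le_trans (abs_nonneg _) (hhb 0)
  set Q : Set (ℝ × ℝ) := Set.Icc a b ×ˢ Set.Icc a b with hQdef
  have hQm : MeasurableSet Q := measurableSet_Icc.prod measurableSet_Icc
  set μ : Measure (ℝ × ℝ) := volume.restrict Q with hμdef
  have hQfin : volume Q < ⊤ := (isCompact_Icc.prod isCompact_Icc).measure_lt_top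
  haveI : IsFiniteMeasure μ := ⟨by rw [hμdef, Measure.restrict_apply_univ]; exact hQfin⟩
  -- diagonal is null
  have hDm : MeasurableSet {p : ℝ × ℝ | p.1 = p.2} :=
    measurableSet_eq_fun measurable_fst measurable_snd
  have hdiagnull : volume {p : ℝ × ℝ | p.1 = p.2} = 0 := by
    rw [MeasureTheory.Measure.volume_eq_prod, Measure.prod_apply hDm]
    have hpre : ∀ x : ℝ, (Prod.mk x ⁻¹' {p : ℝ × ℝ | p.1 = p.2}) = {x} := by
      intro x; ext t; simp [eq_comm]
    simp [hpre]
  have hdiag : ∀ᵐ p : ℝ × ℝ ∂μ, p.1 ≠ p.2 := by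
    refine ae_restrict_of_ae ?_
    rw [ae_iff]
    convert hdiagnull using 2
    ext p; simp
  have hmem : ∀ᵐ p : ℝ × ℝ ∂μ, p ∈ Q := ae_restrict_mem hQm
  -- pointwise facts off the diagonal
  have hnormpos : ∀ p : ℝ × ℝ, p ∈ Q → p.1 ≠ p.2 → 0 < ‖f p.1 - f p.2‖ ∧
      ‖f p.1 - f p.2‖ ^ 2 = R p.1 p.2 * (p.1 - p.2) ^ 2 ∧ 0 < R p.1 p.2 := by
    rintro ⟨s, t⟩ hp hne
    have h2 : (0 : ℝ) < (s - t) ^ 2 := by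
      have : s - t ≠ 0 := sub_ne_zero.mpr hne
      positivity
    have hRe : R s t = ‖f s - f t‖ ^ 2 / (s - t) ^ 2 := hR s t hne
    have hRpos : 0 < R s t := lt_of_lt_of_le hc (hRbound s hp.1 t hp.2 hne).1
    have hnorm2 : ‖f s - f t‖ ^ 2 = R s t * (s - t) ^ 2 := by
      rw [hRe]; field_simp
    refine ⟨?_, hnorm2, hRpos⟩
    by_contra hcon
    push_neg at hcon
    have h0 : ‖f s - f t‖ = 0 := le_antisymm hcon (norm_nonneg _)
    rw [h0] at hnorm2
    nlinarith [mul_pos hRpos h2]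
  have key : ∀ p : ℝ × ℝ, p ∈ Q → p.1 ≠ p.2 →
      K p.1 p.2 = K₁ p.1 p.2 + K₂ p.1 p.2 := by
    rintro ⟨s, t⟩ hp hne
    obtain ⟨hpos, hnorm2, hRpos⟩ := hnormpos ⟨s, t⟩ hp hne
    have hst : s - t ≠ 0 := sub_ne_zero.mpr hne
    have e1 : Real.log (‖f s - f t‖ ^ 2) = 2 * Real.log ‖f s - f t‖ := by
      rw [Real.log_pow]; push_cast; ring
    have e2 : Real.log (R s t * (s - t) ^ 2)
        = Real.log (R s t) + Real.log ((s - t) ^ 2) :=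
      Real.log_mul hRpos.ne' (by positivity)
    have e3 : Real.log ((s - t) ^ 2) = 2 * Real.log |s - t| := by
      rw [← sq_abs, Real.log_pow]; push_cast; ring
    have e4 : Real.log (‖f s - f t‖ ^ 2) = Real.log (R s t * (s - t) ^ 2) := by
      rw [hnorm2]
    simp only [hK, hK₁, hK₂, if_neg hne]
    rw [e1, e2, e3] at e4
    linarith
  -- K₁ integrability
  have hK₁rep : ∀ p : ℝ × ℝ, p ∈ Q → p.1 ≠ p.2 →
      K₁ p.1 p.2 = (1 / 2) * Real.log (‖f p.1 - f p.2‖ ^ 2 / (p.1 - p.2) ^ 2) := by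
    rintro ⟨s, t⟩ hp hne
    rw [hK₁, if_neg hne, hR s t hne]
  have hfc : ContinuousOn (fun p : ℝ × ℝ => ‖f p.1 - f p.2‖) Q := by
    have h0 := hf.continuousOn
    exact ((h0.comp continuousOn_fst fun p hp => hp.1).sub
      (h0.comp continuousOn_snd fun p hp => hp.2)).norm
  have hG1aem : AEMeasurable
      (fun p : ℝ × ℝ => (1 / 2) * Real.log (‖f p.1 - f p.2‖ ^ 2 / (p.1 - p.2) ^ 2)
        * g p.1 * h p.2) μ := by
    have h0 : AEMeasurable (fun p : ℝ × ℝ => ‖f p.1 - f p.2‖) μ := hfc.aemeasurable hQm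
    have h1 : AEMeasurable
        (fun p : ℝ × ℝ => ‖f p.1 - f p.2‖ ^ 2 / (p.1 - p.2) ^ 2) μ :=
      (h0.pow_const 2).div
        (((measurable_fst.sub measurable_snd).pow_const 2).aemeasurable)
    exact (((Real.measurable_log.comp_aemeasurable h1).const_mul (1 / 2)).mul
      ((hg.comp measurable_fst).aemeasurable)).mul ((hh.comp measurable_snd).aemeasurable)
  have h1eq : (fun p : ℝ × ℝ => K₁ p.1 p.2 * g p.1 * h p.2) =ᵐ[μ]
      (fun p : ℝ × ℝ => (1 / 2) * Real.log (‖f p.1 - f p.2‖ ^ 2 / (p.1 - p.2) ^ 2)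
        * g p.1 * h p.2) := by
    filter_upwards [hmem, hdiag] with p hp hne
    rw [hK₁rep p hp hne]
  have hK₁aesm : AEStronglyMeasurable
      (fun p : ℝ × ℝ => K₁ p.1 p.2 * g p.1 * h p.2) μ :=
    (hG1aem.aestronglyMeasurable).congr h1eq.symm
  have hB : ∀ᵐ p : ℝ × ℝ ∂μ,
      ‖K₁ p.1 p.2 * g p.1 * h p.2‖ ≤ max |Real.log c| |Real.log C| * Mg * Mh := by
    filter_upwards [hmem, hdiag] with p hp hne
    have hRb := hRbound p.1 hp.1 p.2 hp.2 hne
    have hRpos : 0 < R p.1 p.2 := lt_of_lt_of_le hc hRb.1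
    have hlb : Real.log c ≤ Real.log (R p.1 p.2) := Real.log_le_log hc hRb.1
    have hub : Real.log (R p.1 p.2) ≤ Real.log C := Real.log_le_log hRpos hRb.2
    have habs : |Real.log (R p.1 p.2)| ≤ max |Real.log c| |Real.log C| :=
      abs_le_max_abs_abs hlb hub
    have hK₁abs : |K₁ p.1 p.2| ≤ max |Real.log c| |Real.log C| := by
      rw [hK₁, if_neg hne, abs_mul]
      have : |(1 : ℝ) / 2| = 1 / 2 := by norm_num
      rw [this]
      nlinarith [abs_nonneg (Real.log (R p.1 p.2)), le_max_left |Real.log c| |Real.log C|,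
        abs_nonneg (Real.log c)]
    rw [Real.norm_eq_abs, abs_mul, abs_mul]
    have h1 : (0:ℝ) ≤ max |Real.log c| |Real.log C| :=
      le_trans (abs_nonneg _) (le_max_left _ _)
    exact mul_le_mul (mul_le_mul hK₁abs (hgb p.1) (abs_nonneg _) h1) (hhb p.2)
      (abs_nonneg _) (mul_nonneg h1 hMg)
  have hI1 : IntegrableOn (fun p : ℝ × ℝ => K₁ p.1 p.2 * g p.1 * h p.2) Q volume :=
    ⟨hK₁aesm, HasFiniteIntegral.of_bounded hB⟩
  -- K₂ integrability
  have hK₂fun : (fun p : ℝ × ℝ => K₂ p.1 p.2 * g p.1 * h p.2)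
      = fun p : ℝ × ℝ => Real.log (p.1 - p.2) * g p.1 * h p.2 := by
    funext p; rw [hK₂, Real.log_abs]
  have hlogint : IntegrableOn (fun p : ℝ × ℝ => Real.log (p.1 - p.2)) Q volume :=
    log_sub_int a b hab
  have hI2 : IntegrableOn (fun p : ℝ × ℝ => K₂ p.1 p.2 * g p.1 * h p.2) Q volume := by
    rw [hK₂fun]
    refine Integrable.mono (hlogint.const_mul (Mg * Mh))
      (((Real.measurable_log.comp (measurable_fst.sub measurable_snd)).mul
        (hg.comp measurable_fst)).mul (hh.comp measurable_snd)).aestronglyMeasurable.restrict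
      (Filter.Eventually.of_forall ?_)
    intro p
    simp only [Real.norm_eq_abs, abs_mul]
    have hg1 := hgb p.1
    have hh1 := hhb p.2
    have h2 := abs_nonneg (g p.1)
    have h3 := abs_nonneg (h p.2)
    have h4 := abs_nonneg (Real.log (p.1 - p.2))
    calc |Real.log (p.1 - p.2)| * |g p.1| * |h p.2|
        ≤ |Real.log (p.1 - p.2)| * Mg * Mh :=
          mul_le_mul (mul_le_mul_of_nonneg_left hg1 h4) hh1 h3 (mul_nonneg h4 hMg)
      _ = |Mg * Mh| * |Real.log (p.1 - p.2)| := by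
          rw [abs_of_nonneg (mul_nonneg hMg hMh)]; ring
      _ = |Mg| * |Mh| * |Real.log (p.1 - p.2)| := by rw [abs_mul]
  -- K = K₁ + K₂ a.e.
  have heq : (fun p : ℝ × ℝ => K p.1 p.2 * g p.1 * h p.2) =ᵐ[μ]
      (fun p : ℝ × ℝ => K₁ p.1 p.2 * g p.1 * h p.2 + K₂ p.1 p.2 * g p.1 * h p.2) := by
    filter_upwards [hmem, hdiag] with p hp hne
    rw [key p hp hne]; ring
  have hI : IntegrableOn (fun p : ℝ × ℝ => K p.1 p.2 * g p.1 * h p.2) Q volume :=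
    (hI1.add hI2).congr heq.symm
  refine ⟨hI, hI1, hI2, ?_⟩
  rw [integral_congr_ae heq]
  exact integral_add hI1 hI2
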